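/- arXiv:2002.10816 — 3 statements merged into one kernel-verified Lean document; each statement's English description precedes it below -/
import Mathlib

section
/- Let p, d, N be positive integers, Σ_p ∈ ℝ^{p×p} symmetric positive definite, λ > 0, θ ∈ ℝ^d, and Φ_1, …, Φ_N ∈ ℝ^{p×d}, η_1, …, η_N ∈ ℝ^p. Suppose y_n = Φ_n θ + η_n for n = 1, …, N, and define G_{N,λ} = Σ_{n=1}^N Φ_nᵀ Σ_p^{-1} Φ_n + λ I_d and θ_{N,λ} = G_{N,λ}^{-1} Σ_{n=1}^N Φ_nᵀ Σ_p^{-1} y_n. Then ‖θ_{N,λ} − θ‖_{G_{N,λ}} ≤ ‖Σ_{n=1}^N Φ_nᵀ Σ_p^{-1} η_n‖_{G_{N,λ}^{-1}} + λ ‖θ‖_{G_{N,λ}^{-1}}, where ‖x‖_M = √(xᵀ M x). -/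
open Matrix Finset

open scoped MatrixOrder in
private noncomputable def Matrix.PosSemidef.sqrt {n : ℕ} {A : Matrix (Fin n) (Fin n) ℝ}
    (_hA : A.PosSemidef) : Matrix (Fin n) (Fin n) ℝ :=
  CFC.sqrt A

open scoped MatrixOrder in
private lemma Matrix.PosSemidef.sqrt_mul_self {n : ℕ} {A : Matrix (Fin n) (Fin n) ℝ}
    (hA : A.PosSemidef) : hA.sqrt * hA.sqrt = A :=
  CFC.sqrt_mul_sqrt_self A hA.nonneg

open scoped MatrixOrder in
private lemma Matrix.PosSemidef.posSemidef_sqrt {n : ℕ} {A : Matrix (Fin n) (Fin n) ℝ}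
    (hA : A.PosSemidef) : hA.sqrt.PosSemidef :=
  (CFC.sqrt_nonneg A).posSemidef

private lemma euclid_sqrt_dot {n : ℕ} (u : Fin n → ℝ) :
    Real.sqrt (u ⬝ᵥ u) = ‖(WithLp.equiv 2 (Fin n → ℝ)).symm u‖ := by
  rw [EuclideanSpace.norm_eq]
  congr 1
  simp [dotProduct, sq]

private lemma sum_mulVec' {ι : Type*} {d : ℕ} (s : Finset ι) (M : ι → Matrix (Fin d) (Fin d) ℝ)
    (x : Fin d → ℝ) :
    (∑ i ∈ s, M i) *ᵥ x = ∑ i ∈ s, (M i) *ᵥ x := by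
  induction s using Finset.cons_induction with
  | empty => simp
  | cons a s ha ih => simp [Finset.sum_cons, Matrix.add_mulVec, ih]

private lemma quad_eq_sq {n : ℕ} {M : Matrix (Fin n) (Fin n) ℝ} (hM : M.PosSemidef)
    (x : Fin n → ℝ) :
    x ⬝ᵥ M.mulVec x = (hM.sqrt.mulVec x) ⬝ᵥ (hM.sqrt.mulVec x) := by
  have hS : hM.sqrt.vecMul x = hM.sqrt.mulVec x := by
    rw [← mulVec_transpose, ← conjTranspose_eq_transpose_of_trivial,
      hM.posSemidef_sqrt.isHermitian.eq]
  conv_lhs => rw [← hM.sqrt_mul_self, ← mulVec_mulVec, dotProduct_mulVec]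
  rw [hS]

/-- Deterministic error decomposition for the regularised least-squares estimator:
`‖θ_{N,λ} − θ‖_{G_{N,λ}} ≤ ‖Σ_n Φ_nᵀ Σ_p⁻¹ η_n‖_{G_{N,λ}⁻¹} + λ ‖θ‖_{G_{N,λ}⁻¹}`. -/
theorem stmt_5 (p d N : ℕ) (hp : 0 < p) (hd : 0 < d) (hN : 0 < N)
    (Sp : Matrix (Fin p) (Fin p) ℝ) (hSp : Sp.PosDef)
    (lam : ℝ) (hlam : 0 < lam)
    (θ : Fin d → ℝ)
    (Φ : Fin N → Matrix (Fin p) (Fin d) ℝ)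
    (η : Fin N → Fin p → ℝ)
    (y : Fin N → Fin p → ℝ)
    (hy : ∀ n, y n = (Φ n).mulVec θ + η n)
    (G : Matrix (Fin d) (Fin d) ℝ)
    (hG : G = (∑ n : Fin N, (Φ n)ᵀ * Sp⁻¹ * Φ n) + lam • (1 : Matrix (Fin d) (Fin d) ℝ))
    (θhat : Fin d → ℝ)
    (hθhat : θhat = G⁻¹.mulVec (∑ n : Fin N, (Φ n)ᵀ.mulVec (Sp⁻¹.mulVec (y n)))) :
    Real.sqrt ((θhat - θ) ⬝ᵥ G.mulVec (θhat - θ)) ≤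
      Real.sqrt ((∑ n : Fin N, (Φ n)ᵀ.mulVec (Sp⁻¹.mulVec (η n))) ⬝ᵥ
          G⁻¹.mulVec (∑ n : Fin N, (Φ n)ᵀ.mulVec (Sp⁻¹.mulVec (η n))))
        + lam * Real.sqrt (θ ⬝ᵥ G⁻¹.mulVec θ) := by
  classical
  -- positivity of G
  have hApsd : (∑ n : Fin N, (Φ n)ᵀ * Sp⁻¹ * Φ n).PosSemidef := by
    refine Finset.sum_induction (fun n => (Φ n)ᵀ * Sp⁻¹ * Φ n)
      (fun M : Matrix (Fin d) (Fin d) ℝ => M.PosSemidef)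
      (fun a b ha hb => ha.add hb) Matrix.PosSemidef.zero (fun n _ => ?_)
    have := (hSp.inv.posSemidef).conjTranspose_mul_mul_same (Φ n)
    rwa [conjTranspose_eq_transpose_of_trivial] at this
  have hsm : (lam • (1 : Matrix (Fin d) (Fin d) ℝ)).PosDef := by
    refine ⟨?_, fun x hx => ?_⟩
    · unfold Matrix.IsHermitian
      rw [conjTranspose_smul, conjTranspose_one]
      simp
    · exact (Matrix.PosDef.one.smul hlam).2 hx
  have hGpd : G.PosDef := hG ▸ Matrix.PosDef.posSemidef_add hApsd hsm
  have hGinv : G⁻¹.PosDef := hGpd.inv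
  have hdet : IsUnit G.det := isUnit_iff_ne_zero.mpr (ne_of_gt hGpd.det_pos)
  have hGsymm : G⁻¹ᵀ = G⁻¹ := by
    rw [← conjTranspose_eq_transpose_of_trivial, hGinv.isHermitian.eq]
  -- error decomposition
  set v : Fin d → ℝ := ∑ n : Fin N, (Φ n)ᵀ.mulVec (Sp⁻¹.mulVec (η n)) with hv
  have hdecomp : θhat - θ = G⁻¹.mulVec v + (-lam) • G⁻¹.mulVec θ := by
    have hsum : (∑ n : Fin N, (Φ n)ᵀ.mulVec (Sp⁻¹.mulVec (y n)))
        = (∑ n : Fin N, (Φ n)ᵀ * Sp⁻¹ * Φ n).mulVec θ + v := by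
      rw [sum_mulVec', ← Finset.sum_add_distrib]
      refine Finset.sum_congr rfl fun n _ => ?_
      simp [hy n, mulVec_mulVec, Matrix.mulVec_add, Matrix.mul_assoc]
    have hAθ : (∑ n : Fin N, (Φ n)ᵀ * Sp⁻¹ * Φ n).mulVec θ = G.mulVec θ - lam • θ := by
      rw [hG, Matrix.add_mulVec, smul_mulVec, one_mulVec]
      abel
    rw [hθhat, hsum, hAθ, Matrix.mulVec_add, Matrix.mulVec_sub, mulVec_mulVec,
      Matrix.nonsing_inv_mul G hdet, one_mulVec, Matrix.mulVec_smul]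
    funext i
    simp only [Pi.add_apply, Pi.sub_apply, Pi.smul_apply, Pi.neg_apply, smul_eq_mul]
    ring
  -- quadratic form identities
  have hGGG : ∀ w : Fin d → ℝ,
      (G⁻¹.mulVec w) ⬝ᵥ G.mulVec (G⁻¹.mulVec w) = w ⬝ᵥ G⁻¹.mulVec w := by
    intro w
    rw [mulVec_mulVec, Matrix.mul_nonsing_inv G hdet, one_mulVec, dotProduct_comm]
  -- pass to Euclidean norms via the PSD square root of G
  have hGpsd := hGpd.posSemidef
  set S := hGpsd.sqrt with hSdef
  set e := (WithLp.equiv 2 (Fin d → ℝ)).symm with he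
  have key : ∀ x : Fin d → ℝ, Real.sqrt (x ⬝ᵥ G.mulVec x) = ‖e (S.mulVec x)‖ := by
    intro x
    rw [quad_eq_sq hGpsd x, euclid_sqrt_dot]
  rw [key]
  have h1 : Real.sqrt (v ⬝ᵥ G⁻¹.mulVec v) = ‖e (S.mulVec (G⁻¹.mulVec v))‖ := by
    rw [← hGGG v, key]
  have h2 : Real.sqrt (θ ⬝ᵥ G⁻¹.mulVec θ) = ‖e (S.mulVec (G⁻¹.mulVec θ))‖ := by
    rw [← hGGG θ, key]
  rw [h1, h2, hdecomp, Matrix.mulVec_add, Matrix.mulVec_smul]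
  have : e (S.mulVec (G⁻¹.mulVec v) + (-lam) • S.mulVec (G⁻¹.mulVec θ))
      = e (S.mulVec (G⁻¹.mulVec v)) + (-lam) • e (S.mulVec (G⁻¹.mulVec θ)) := by
    rw [he, WithLp.equiv_symm_apply, WithLp.toLp_add, WithLp.toLp_smul]
  rw [this]
  calc ‖e (S.mulVec (G⁻¹.mulVec v)) + (-lam) • e (S.mulVec (G⁻¹.mulVec θ))‖
      ≤ ‖e (S.mulVec (G⁻¹.mulVec v))‖ + ‖(-lam) • e (S.mulVec (G⁻¹.mulVec θ))‖ :=
        norm_add_le _ _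
    _ = ‖e (S.mulVec (G⁻¹.mulVec v))‖ + lam * ‖e (S.mulVec (G⁻¹.mulVec θ))‖ := by
        rw [norm_smul, Real.norm_eq_abs, abs_neg, abs_of_pos hlam]
end

section
/- Let A, A̲, Ā ∈ ℝ^{p×p} with A̲ ≤ A ≤ Ā entrywise, B ∈ ℝ^{p×q}, D ∈ ℝ^{p×r}, and let u : [t₀,∞) → ℝ^q and ω, ω̲, ω̄ : [t₀,∞) → ℝ^r be continuous with ω̲(t) ≤ ω(t) ≤ ω̄(t) componentwise for all t ≥ t₀. Let x : [t₀,∞) → ℝ^p be continuously differentiable with ẋ(t) = A x(t) + B u(t) + D ω(t), and let x̲, x̄ : [t₀,∞) → ℝ^p be continuously differentiable solutions of ẋ̲(t) = A̲⁺ x̲⁺(t) − Ā⁺ x̲⁻(t) − A̲⁻ x̄⁺(t) + Ā⁻ x̄⁻(t) + B u(t) + D⁺ ω̲(t) − D⁻ ω̄(t) and ẋ̄(t) = Ā⁺ x̄⁺(t) − A̲⁺ x̄⁻(t) − Ā⁻ x̲⁺(t) + A̲⁻ x̲⁻(t) + B u(t) + D⁺ ω̄(t) − D⁻ ω̲(t),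 with x̲(t₀) = x̄(t₀) = x(t₀). Then x̲(t) ≤ x(t) ≤ x̄(t) componentwise for all t ≥ t₀. -/
open Matrix

/-- Entrywise positive part of a matrix: `A⁺ = max(A, 0)`. -/
def matPos {m n : Type*} (A : Matrix m n ℝ) : Matrix m n ℝ := fun i j => max (A i j) 0

/-- Entrywise negative part of a matrix: `A⁻ = A⁺ − A`. -/
def matNeg {m n : Type*} (A : Matrix m n ℝ) : Matrix m n ℝ := matPos A - A

/-- Componentwise positive part of a vector: `x⁺ = max(x, 0)`. -/
def vecPos {n : Type*} (x : n → ℝ) : n → ℝ := fun i => max (x i) 0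

/-- Componentwise negative part of a vector: `x⁻ = x⁺ − x`. -/
def vecNeg {n : Type*} (x : n → ℝ) : n → ℝ := vecPos x - x

private lemma scalar_lo (alo a ahi xl xx xh M : ℝ) (h1 : alo ≤ a) (h2 : a ≤ ahi)
    (hM : 0 ≤ M) (hl : xl ≤ xx + M) (hh : xx - M ≤ xh) :
    max alo 0 * max xl 0 - max ahi 0 * (max xl 0 - xl) - (max alo 0 - alo) * max xh 0
      + (max ahi 0 - ahi) * (max xh 0 - xh) - a * xx
      ≤ (max alo 0 + max ahi 0 + (max alo 0 - alo) + (max ahi 0 - ahi)) * M := by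
  have hflip : ∀ t : ℝ, max t 0 - t = max (-t) 0 := by
    intro t
    rcases le_total t 0 with h | h
    · rw [max_eq_right h, max_eq_left (by linarith)]; ring
    · rw [max_eq_left h, max_eq_right (by linarith)]; ring
  have hp1 : (0:ℝ) ≤ max alo 0 := le_max_right _ _
  have hp2 : (0:ℝ) ≤ max ahi 0 := le_max_right _ _
  have hn1 : (0:ℝ) ≤ max alo 0 - alo := by
    have := le_max_left alo (0:ℝ); linarith
  have hn2 : (0:ℝ) ≤ max ahi 0 - ahi := by
    have := le_max_left ahi (0:ℝ); linarith
  have hX : (0:ℝ) ≤ max xx 0 := le_max_right _ _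
  have hXm : (0:ℝ) ≤ max xx 0 - xx := by have := le_max_left xx (0:ℝ); linarith
  have ha1 : max xl 0 ≤ max xx 0 + M :=
    max_le (by linarith [le_max_left xx (0:ℝ)]) (by linarith)
  have hb1 : max xx 0 - xx - M ≤ max xl 0 - xl := by
    rw [hflip xx, hflip xl]
    have : max (-xx) 0 ≤ max (-xl) 0 + M :=
      max_le (by linarith [le_max_left (-xl) (0:ℝ)]) (by linarith [le_max_right (-xl) (0:ℝ)])
    linarith
  have hc1 : max xx 0 - M ≤ max xh 0 := by
    have : max xx 0 ≤ max xh 0 + M :=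
      max_le (by linarith [le_max_left xh (0:ℝ)]) (by linarith [le_max_right xh (0:ℝ)])
    linarith
  have hd1 : max xh 0 - xh ≤ max xx 0 - xx + M := by
    rw [hflip xx, hflip xh]
    exact max_le (by linarith [le_max_left (-xx) (0:ℝ)]) (by linarith [le_max_right (-xx) (0:ℝ)])
  have e1 : max alo 0 * max xl 0 ≤ max alo 0 * (max xx 0 + M) :=
    mul_le_mul_of_nonneg_left ha1 hp1
  have e2 : max ahi 0 * (max xx 0 - xx - M) ≤ max ahi 0 * (max xl 0 - xl) :=
    mul_le_mul_of_nonneg_left hb1 hp2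
  have e3 : (max alo 0 - alo) * (max xx 0 - M) ≤ (max alo 0 - alo) * max xh 0 :=
    mul_le_mul_of_nonneg_left hc1 hn1
  have e4 : (max ahi 0 - ahi) * (max xh 0 - xh) ≤ (max ahi 0 - ahi) * (max xx 0 - xx + M) :=
    mul_le_mul_of_nonneg_left hd1 hn2
  have c1 : (alo - a) * max xx 0 ≤ 0 := mul_nonpos_of_nonpos_of_nonneg (by linarith) hX
  have c2 : (a - ahi) * (max xx 0 - xx) ≤ 0 := mul_nonpos_of_nonpos_of_nonneg (by linarith) hXm
  nlinarith [e1, e2, e3, e4, c1, c2]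


private lemma scalar_hi (alo a ahi xl xx xh M : ℝ) (h1 : alo ≤ a) (h2 : a ≤ ahi)
    (hM : 0 ≤ M) (hl : xl ≤ xx + M) (hh : xx - M ≤ xh) :
    a * xx - (max ahi 0 * max xh 0 - max alo 0 * (max xh 0 - xh) - (max ahi 0 - ahi) * max xl 0
      + (max alo 0 - alo) * (max xl 0 - xl))
      ≤ (max alo 0 + max ahi 0 + (max alo 0 - alo) + (max ahi 0 - ahi)) * M := by
  have hflip : ∀ t : ℝ, max t 0 - t = max (-t) 0 := by
    intro t
    rcases le_total t 0 with h | h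
    · rw [max_eq_right h, max_eq_left (by linarith)]; ring
    · rw [max_eq_left h, max_eq_right (by linarith)]; ring
  have hp1 : (0:ℝ) ≤ max alo 0 := le_max_right _ _
  have hp2 : (0:ℝ) ≤ max ahi 0 := le_max_right _ _
  have hn1 : (0:ℝ) ≤ max alo 0 - alo := by
    have := le_max_left alo (0:ℝ); linarith
  have hn2 : (0:ℝ) ≤ max ahi 0 - ahi := by
    have := le_max_left ahi (0:ℝ); linarith
  have hX : (0:ℝ) ≤ max xx 0 := le_max_right _ _
  have hXm : (0:ℝ) ≤ max xx 0 - xx := by have := le_max_left xx (0:ℝ); linarith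
  have hc1 : max xx 0 - M ≤ max xh 0 := by
    have : max xx 0 ≤ max xh 0 + M :=
      max_le (by linarith [le_max_left xh (0:ℝ)]) (by linarith [le_max_right xh (0:ℝ)])
    linarith
  have hd1 : max xh 0 - xh ≤ max xx 0 - xx + M := by
    rw [hflip xx, hflip xh]
    exact max_le (by linarith [le_max_left (-xx) (0:ℝ)]) (by linarith [le_max_right (-xx) (0:ℝ)])
  have ha1 : max xl 0 ≤ max xx 0 + M :=
    max_le (by linarith [le_max_left xx (0:ℝ)]) (by linarith)
  have hb1 : max xx 0 - xx - M ≤ max xl 0 - xl := by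
    rw [hflip xx, hflip xl]
    have : max (-xx) 0 ≤ max (-xl) 0 + M :=
      max_le (by linarith [le_max_left (-xl) (0:ℝ)]) (by linarith [le_max_right (-xl) (0:ℝ)])
    linarith
  have e1 : max ahi 0 * (max xx 0 - M) ≤ max ahi 0 * max xh 0 :=
    mul_le_mul_of_nonneg_left hc1 hp2
  have e2 : max alo 0 * (max xh 0 - xh) ≤ max alo 0 * (max xx 0 - xx + M) :=
    mul_le_mul_of_nonneg_left hd1 hp1
  have e3 : (max ahi 0 - ahi) * max xl 0 ≤ (max ahi 0 - ahi) * (max xx 0 + M) :=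
    mul_le_mul_of_nonneg_left ha1 hn2
  have e4 : (max alo 0 - alo) * (max xx 0 - xx - M) ≤ (max alo 0 - alo) * (max xl 0 - xl) :=
    mul_le_mul_of_nonneg_left hb1 hn1
  have c1 : (a - ahi) * max xx 0 ≤ 0 := mul_nonpos_of_nonpos_of_nonneg (by linarith) hX
  have c2 : (alo - a) * (max xx 0 - xx) ≤ 0 := mul_nonpos_of_nonpos_of_nonneg (by linarith) hXm
  nlinarith [e1, e2, e3, e4, c1, c2]

/-- Interval predictor of Efimov et al. (2012): for a linear system with state matrix
enclosed entrywise in `[A̲, Ā]` and disturbance enclosed in `[ω̲, ω̄]`, the interval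
predictor encloses the true trajectory componentwise. -/
theorem stmt_7 (p q r : ℕ)
    (A Alo Ahi : Matrix (Fin p) (Fin p) ℝ)
    (hA : ∀ i j, Alo i j ≤ A i j ∧ A i j ≤ Ahi i j)
    (B : Matrix (Fin p) (Fin q) ℝ) (D : Matrix (Fin p) (Fin r) ℝ)
    (t₀ : ℝ) (u : ℝ → Fin q → ℝ) (w wlo whi : ℝ → Fin r → ℝ)
    (hu : ContinuousOn u (Set.Ici t₀)) (hw : ContinuousOn w (Set.Ici t₀))
    (hwlo : ContinuousOn wlo (Set.Ici t₀)) (hwhi : ContinuousOn whi (Set.Ici t₀))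
    (hwle : ∀ t ∈ Set.Ici t₀, ∀ i, wlo t i ≤ w t i ∧ w t i ≤ whi t i)
    (x xlo xhi : ℝ → Fin p → ℝ)
    (hx : ∀ t ∈ Set.Ici t₀, HasDerivWithinAt x
      (A.mulVec (x t) + B.mulVec (u t) + D.mulVec (w t)) (Set.Ici t₀) t)
    (hxlo : ∀ t ∈ Set.Ici t₀, HasDerivWithinAt xlo
      ((matPos Alo).mulVec (vecPos (xlo t)) - (matPos Ahi).mulVec (vecNeg (xlo t))
        - (matNeg Alo).mulVec (vecPos (xhi t)) + (matNeg Ahi).mulVec (vecNeg (xhi t))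
        + B.mulVec (u t) + (matPos D).mulVec (wlo t) - (matNeg D).mulVec (whi t))
      (Set.Ici t₀) t)
    (hxhi : ∀ t ∈ Set.Ici t₀, HasDerivWithinAt xhi
      ((matPos Ahi).mulVec (vecPos (xhi t)) - (matPos Alo).mulVec (vecNeg (xhi t))
        - (matNeg Ahi).mulVec (vecPos (xlo t)) + (matNeg Alo).mulVec (vecNeg (xlo t))
        + B.mulVec (u t) + (matPos D).mulVec (whi t) - (matNeg D).mulVec (wlo t))
      (Set.Ici t₀) t)
    (hinit : xlo t₀ = x t₀ ∧ xhi t₀ = x t₀) :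
    ∀ t ∈ Set.Ici t₀, ∀ i, xlo t i ≤ x t i ∧ x t i ≤ xhi t i := by
  classical
  rcases Nat.eq_zero_or_pos p with hp0 | hp0
  · intro t ht i; exact absurd i.isLt (by omega)
  haveI hne : Nonempty (Fin p) := ⟨⟨0, hp0⟩⟩
  -- the Lipschitz constant
  set K : ℝ := ∑ i : Fin p, ∑ j : Fin p,
      (max (Alo i j) 0 + max (Ahi i j) 0 + (max (Alo i j) 0 - Alo i j)
        + (max (Ahi i j) 0 - Ahi i j)) with hK
  have hKterm : ∀ i j : Fin p, (0:ℝ) ≤ max (Alo i j) 0 + max (Ahi i j) 0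
      + (max (Alo i j) 0 - Alo i j) + (max (Ahi i j) 0 - Ahi i j) := by
    intro i j
    have h1 := le_max_right (Alo i j) (0:ℝ)
    have h2 := le_max_right (Ahi i j) (0:ℝ)
    have h3 := le_max_left (Alo i j) (0:ℝ)
    have h4 := le_max_left (Ahi i j) (0:ℝ)
    linarith
  have hK0 : 0 ≤ K := Finset.sum_nonneg fun i _ => Finset.sum_nonneg fun j _ => hKterm i j
  have hrow : ∀ i : Fin p, (∑ j : Fin p, (max (Alo i j) 0 + max (Ahi i j) 0
      + (max (Alo i j) 0 - Alo i j) + (max (Ahi i j) 0 - Ahi i j))) ≤ K :=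
    fun i => Finset.single_le_sum
      (fun i _ => Finset.sum_nonneg fun j _ => hKterm i j) (Finset.mem_univ i)
  -- the deviation functions
  set v : Fin p × Bool → ℝ → ℝ := fun it t =>
    if it.2 then xlo t it.1 - x t it.1 else x t it.1 - xhi t it.1 with hv
  set v' : Fin p × Bool → ℝ → ℝ := fun it t =>
    if it.2 then
      ((matPos Alo).mulVec (vecPos (xlo t)) - (matPos Ahi).mulVec (vecNeg (xlo t))
        - (matNeg Alo).mulVec (vecPos (xhi t)) + (matNeg Ahi).mulVec (vecNeg (xhi t))
        + B.mulVec (u t) + (matPos D).mulVec (wlo t) - (matNeg D).mulVec (whi t)) it.1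
      - (A.mulVec (x t) + B.mulVec (u t) + D.mulVec (w t)) it.1
    else (A.mulVec (x t) + B.mulVec (u t) + D.mulVec (w t)) it.1
      - ((matPos Ahi).mulVec (vecPos (xhi t)) - (matPos Alo).mulVec (vecNeg (xhi t))
        - (matNeg Ahi).mulVec (vecPos (xlo t)) + (matNeg Alo).mulVec (vecNeg (xlo t))
        + B.mulVec (u t) + (matPos D).mulVec (whi t) - (matNeg D).mulVec (wlo t)) it.1
    with hv'
  have hdv : ∀ it : Fin p × Bool, ∀ t ∈ Set.Ici t₀,
      HasDerivWithinAt (v it) (v' it t) (Set.Ici t₀) t := by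
    rintro ⟨i, b⟩ t ht
    have h1 := (hasDerivWithinAt_pi.1 (hx t ht)) i
    have h2 := (hasDerivWithinAt_pi.1 (hxlo t ht)) i
    have h3 := (hasDerivWithinAt_pi.1 (hxhi t ht)) i
    cases b
    · exact h1.sub h3
    · exact h2.sub h1
  have hS : (Finset.univ : Finset (Fin p × Bool)).Nonempty := Finset.univ_nonempty
  set Φ : ℝ → ℝ := fun t =>
    max 0 (Finset.univ.sup' hS fun it : Fin p × Bool => v it t) with hΦ
  have hΦ0 : ∀ t, 0 ≤ Φ t := fun t => le_max_left _ _
  have hvΦ : ∀ it t, v it t ≤ Φ t := fun it t =>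
    le_trans (Finset.le_sup' (fun it => v it t) (Finset.mem_univ it)) (le_max_right _ _)
  -- key derivative bound
  have key : ∀ t ∈ Set.Ici t₀, ∀ M : ℝ, 0 ≤ M →
      (∀ k, xlo t k - x t k ≤ M) → (∀ k, x t k - xhi t k ≤ M) →
      ∀ it : Fin p × Bool, v' it t ≤ K * M := by
    intro t ht M hM hLo hHi it
    obtain ⟨i, b⟩ := it
    have hDpos : ∀ dk : ℝ, (0:ℝ) ≤ max dk 0 := fun dk => le_max_right _ _
    have hDneg : ∀ dk : ℝ, (0:ℝ) ≤ max dk 0 - dk := fun dk => by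
      have := le_max_left dk (0:ℝ); linarith
    have hArow : ∀ gA : Fin p → ℝ,
        (∀ k, gA k ≤ (max (Alo i k) 0 + max (Ahi i k) 0
          + (max (Alo i k) 0 - Alo i k) + (max (Ahi i k) 0 - Ahi i k)) * M) →
        (∑ k, gA k) ≤ K * M := by
      intro gA hk
      calc (∑ k, gA k) ≤ ∑ k, (max (Alo i k) 0 + max (Ahi i k) 0
            + (max (Alo i k) 0 - Alo i k) + (max (Ahi i k) 0 - Ahi i k)) * M :=
          Finset.sum_le_sum fun k _ => hk k
        _ = (∑ k, (max (Alo i k) 0 + max (Ahi i k) 0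
            + (max (Alo i k) 0 - Alo i k) + (max (Ahi i k) 0 - Ahi i k))) * M := by
          rw [Finset.sum_mul]
        _ ≤ K * M := mul_le_mul_of_nonneg_right (hrow i) hM
    cases b
    · -- upper bound side
      have expand : v' (i, false) t
          = (∑ k, (A i k * x t k
              - (max (Ahi i k) 0 * max (xhi t k) 0
                - max (Alo i k) 0 * (max (xhi t k) 0 - xhi t k)
                - (max (Ahi i k) 0 - Ahi i k) * max (xlo t k) 0
                + (max (Alo i k) 0 - Alo i k) * (max (xlo t k) 0 - xlo t k))))
            + ∑ k, (D i k * w t k - max (D i k) 0 * whi t k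
                + (max (D i k) 0 - D i k) * wlo t k) := by
        simp only [hv', if_neg Bool.false_ne_true, Pi.add_apply, Pi.sub_apply, mulVec,
          dotProduct, matPos, matNeg, vecPos, vecNeg, Matrix.sub_apply, Pi.sub_apply,
          Finset.sum_sub_distrib, Finset.sum_add_distrib]
        ring
      rw [expand]
      have hD : (∑ k, (D i k * w t k - max (D i k) 0 * whi t k
          + (max (D i k) 0 - D i k) * wlo t k)) ≤ 0 := by
        apply Finset.sum_nonpos
        intro k _
        have h1 := (hwle t ht k).1
        have h2 := (hwle t ht k).2
        nlinarith [hDpos (D i k), hDneg (D i k)]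
      have hA' := hArow (fun k => A i k * x t k
          - (max (Ahi i k) 0 * max (xhi t k) 0
            - max (Alo i k) 0 * (max (xhi t k) 0 - xhi t k)
            - (max (Ahi i k) 0 - Ahi i k) * max (xlo t k) 0
            + (max (Alo i k) 0 - Alo i k) * (max (xlo t k) 0 - xlo t k)))
        (fun k => scalar_hi (Alo i k) (A i k) (Ahi i k) (xlo t k) (x t k) (xhi t k) M
          (hA i k).1 (hA i k).2 hM (by linarith [hLo k]) (by linarith [hHi k]))
      linarith
    · -- lower bound side
      have expand : v' (i, true) t
          = (∑ k, (max (Alo i k) 0 * max (xlo t k) 0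
              - max (Ahi i k) 0 * (max (xlo t k) 0 - xlo t k)
              - (max (Alo i k) 0 - Alo i k) * max (xhi t k) 0
              + (max (Ahi i k) 0 - Ahi i k) * (max (xhi t k) 0 - xhi t k)
              - A i k * x t k))
            + ∑ k, (max (D i k) 0 * wlo t k - (max (D i k) 0 - D i k) * whi t k
                - D i k * w t k) := by
        simp only [hv', if_pos rfl, Pi.add_apply, Pi.sub_apply, mulVec,
          dotProduct, matPos, matNeg, vecPos, vecNeg, Matrix.sub_apply, Pi.sub_apply,
          Finset.sum_sub_distrib, Finset.sum_add_distrib]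
        ring
      rw [expand]
      have hD : (∑ k, (max (D i k) 0 * wlo t k - (max (D i k) 0 - D i k) * whi t k
          - D i k * w t k)) ≤ 0 := by
        apply Finset.sum_nonpos
        intro k _
        have h1 := (hwle t ht k).1
        have h2 := (hwle t ht k).2
        nlinarith [hDpos (D i k), hDneg (D i k)]
      have hA' := hArow (fun k => max (Alo i k) 0 * max (xlo t k) 0
              - max (Ahi i k) 0 * (max (xlo t k) 0 - xlo t k)
              - (max (Alo i k) 0 - Alo i k) * max (xhi t k) 0
              + (max (Ahi i k) 0 - Ahi i k) * (max (xhi t k) 0 - xhi t k)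
              - A i k * x t k)
        (fun k => scalar_lo (Alo i k) (A i k) (Ahi i k) (xlo t k) (x t k) (xhi t k) M
          (hA i k).1 (hA i k).2 hM (by linarith [hLo k]) (by linarith [hHi k]))
      linarith
  -- Gronwall-type bound
  have main : ∀ T, t₀ ≤ T → ∀ ε : ℝ, 0 < ε → ∀ t ∈ Set.Icc t₀ T,
      Φ t ≤ ε * Real.exp ((K + 1) * (t - t₀)) := by
    intro T hT ε hε
    set Bf : ℝ → ℝ := fun t => ε * Real.exp ((K + 1) * (t - t₀)) with hBf
    set Bf' : ℝ → ℝ := fun t => (K + 1) * Bf t with hBf'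
    have hBpos : ∀ s, 0 < Bf s := fun s => by
      simp only [hBf]; positivity
    have hBd : ∀ s, HasDerivAt Bf (Bf' s) s := by
      intro s
      have h1 : HasDerivAt (fun t : ℝ => (K + 1) * (t - t₀)) (K + 1) s := by
        simpa using ((hasDerivAt_id s).sub_const t₀).const_mul (K + 1)
      have h2 := (h1.exp).const_mul ε
      refine h2.congr_deriv ?_
      simp only [hBf', hBf]
      ring
    set f' : ℝ → ℝ := fun t => max 0 (Finset.univ.sup' hS fun it => v' it t) with hf'
    have hΦcont : ContinuousOn Φ (Set.Icc t₀ T) := by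
      simp only [hΦ]
      apply ContinuousOn.sup continuousOn_const
      exact ContinuousOn.finset_sup'_apply hS fun it _ => fun s hs =>
        ((hdv it s hs.1).continuousWithinAt).mono
          (fun z hz => (hz.1 : t₀ ≤ z))
    have hinit' : Φ t₀ ≤ Bf t₀ := by
      simp only [hΦ]
      apply max_le (hBpos t₀).le
      apply Finset.sup'_le
      rintro ⟨i, b⟩ -
      have hl : xlo t₀ i = x t₀ i := congrFun hinit.1 i
      have hh : xhi t₀ i = x t₀ i := congrFun hinit.2 i
      cases b <;> simp only [hv] <;> simp [hl, hh] <;> exact (hBpos t₀).le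
    have hslope : ∀ s ∈ Set.Ico t₀ T, ∀ ρ, f' s < ρ →
        ∃ᶠ z in nhdsWithin s (Set.Ioi s), slope Φ s z < ρ := by
      intro s hs ρ hρ
      have hρ0 : 0 < ρ := lt_of_le_of_lt (le_max_left _ _) hρ
      have hders : ∀ it : Fin p × Bool, ∀ᶠ z in nhdsWithin s (Set.Ioi s),
          slope (v it) s z < ρ := by
        intro it
        have hlt : v' it s < ρ :=
          lt_of_le_of_lt (le_trans (Finset.le_sup' (fun it => v' it s) (Finset.mem_univ it))
            (le_max_right _ _)) hρ
        have htd := hasDerivWithinAt_iff_tendsto_slope.1 (hdv it s hs.1)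
        have hmono : nhdsWithin s (Set.Ioi s) ≤ nhdsWithin s (Set.Ici t₀ \ {s}) :=
          nhdsWithin_mono s (fun z hz => ⟨le_trans hs.1 (le_of_lt hz), by
            simp only [Set.mem_singleton_iff]; exact ne_of_gt hz⟩)
        exact (htd.mono_left hmono).eventually_lt_const hlt
      have hall : ∀ᶠ z in nhdsWithin s (Set.Ioi s),
          ∀ it : Fin p × Bool, slope (v it) s z < ρ := Filter.eventually_all.2 hders
      apply Filter.Eventually.frequently
      filter_upwards [hall, self_mem_nhdsWithin] with z hz hzs
      have hzs' : s < z := hzs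
      have hΦz : Φ z < Φ s + ρ * (z - s) := by
        rw [show Φ z = max 0 (Finset.univ.sup' hS fun it : Fin p × Bool => v it z) from rfl]
        apply max_lt
        · have := hΦ0 s; nlinarith
        · rw [Finset.sup'_lt_iff]
          rintro it -
          have h1 : slope (v it) s z < ρ := hz it
          rw [slope_def_field] at h1
          have h2 : v it z - v it s < ρ * (z - s) := by
            have := (div_lt_iff₀ (by linarith : (0:ℝ) < z - s)).1 h1
            linarith
          have := hvΦ it s
          linarith
      rw [slope_def_field]
      rw [div_lt_iff₀ (by linarith : (0:ℝ) < z - s)]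
      linarith
    have hbound : ∀ s ∈ Set.Ico t₀ T, Φ s = Bf s → f' s < Bf' s := by
      intro s hs hc
      have hb : ∀ it : Fin p × Bool, v it s ≤ Bf s := fun it => hc ▸ hvΦ it s
      have hLo : ∀ k, xlo s k - x s k ≤ Bf s := fun k => by
        have := hb (k, true); simpa [hv] using this
      have hHi : ∀ k, x s k - xhi s k ≤ Bf s := fun k => by
        have := hb (k, false); simpa [hv] using this
      have hk := key s hs.1 (Bf s) (hBpos s).le hLo hHi
      rw [show f' s = max 0 (Finset.univ.sup' hS fun it : Fin p × Bool => v' it s) from rfl]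
      apply max_lt
      · have := hBpos s; simp only [hBf']; nlinarith
      · rw [Finset.sup'_lt_iff]
        rintro it -
        have h1 := hk it
        have h2 := hBpos s
        simp only [hBf']
        nlinarith
    exact fun t htT => image_le_of_liminf_slope_right_lt_deriv_boundary
      hΦcont hslope hinit' hBd hbound htT
  -- conclude
  intro t ht i
  have hΦt : Φ t ≤ 0 := by
    by_contra hcon
    push_neg at hcon
    set C : ℝ := Real.exp ((K + 1) * (t - t₀)) with hC
    have hCpos : 0 < C := Real.exp_pos _
    have h := main t ht (Φ t / (2 * C)) (by positivity) t ⟨ht, le_refl t⟩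
    rw [← hC] at h
    have : Φ t / (2 * C) * C = Φ t / 2 := by field_simp
    rw [this] at h
    linarith
  constructor
  · have h1 := le_trans (hvΦ (i, true) t) hΦt
    simp only [hv] at h1
    simp at h1
    linarith
  · have h1 := le_trans (hvΦ (i, false) t) hΦt
    simp only [hv] at h1
    simp at h1
    linarith
end

section
/- Let A₀, ΔA_1, …, ΔA_M ∈ ℝ^{p×p} with A₀ Metzler (all off-diagonal entries nonnegative), and let A = A₀ + Σ_{i=1}^M α_i ΔA_i for some α_1, …, α_M ≥ 0 with Σ_{i=1}^M α_i = 1. Set ΔA₊ = Σ_{i=1}^M ΔA_i⁺ and ΔA₋ = Σ_{i=1}^M ΔA_i⁻. Let B ∈ ℝ^{p×q}, D ∈ ℝ^{p×r}, and u : [t₀,∞) → ℝ^q, ω, ω̲, ω̄ : [t₀,∞) → ℝ^r continuous with ω̲(t) ≤ ω(t) ≤ ω̄(t) componentwise. Let x : [t₀,∞) → ℝ^p be continuously differentiable with ẋ(t) = A x(t) + B u(t) + D ω(t), and let x̲, x̄ be continuously differentiable solutions of ẋ̲(t) = A₀ x̲(t) − ΔA₊ x̲⁻(t) − ΔA₋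 x̄⁺(t) + B u(t) + D⁺ ω̲(t) − D⁻ ω̄(t) and ẋ̄(t) = A₀ x̄(t) + ΔA₊ x̄⁺(t) + ΔA₋ x̲⁻(t) + B u(t) + D⁺ ω̄(t) − D⁻ ω̲(t), with x̲(t₀) = x̄(t₀) = x(t₀). Then x̲(t) ≤ x(t) ≤ x̄(t) componentwise for all t ≥ t₀. -/
open Matrix Finset

section Aux

/-- right-derivative value of the negative-part composition -/
noncomputable def dneg (v d : ℝ) : ℝ :=
  if v < 0 then -d else if 0 < v then 0 else max (-d) 0

lemma negPart_hasDerivWithinAt {g : ℝ → ℝ} {g' x : ℝ}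
    (h : HasDerivWithinAt g g' (Set.Ici x) x) :
    HasDerivWithinAt (fun t => max (-(g t)) 0) (dneg (g x) g') (Set.Ici x) x := by
  rcases lt_trichotomy (g x) 0 with hgx | hgx | hgx
  · rw [dneg, if_pos hgx]
    have hev : ∀ᶠ t in nhdsWithin x (Set.Ici x), g t < 0 :=
      h.continuousWithinAt.eventually_lt_const hgx
    have : (fun t => max (-(g t)) 0) =ᶠ[nhdsWithin x (Set.Ici x)] (fun t => -(g t)) := by
      filter_upwards [hev] with t ht
      exact max_eq_left (by linarith)
    exact h.neg.congr_of_eventuallyEq this (max_eq_left (by linarith))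
  · rw [dneg, if_neg (by simp [hgx]), if_neg (by simp [hgx])]
    rw [hasDerivWithinAt_iff_tendsto_slope] at h ⊢
    rw [Set.Ici_sdiff_left] at h ⊢
    have hc : Continuous (fun r : ℝ => max (-r) 0) := (continuous_neg).max continuous_const
    have := (hc.tendsto g').comp h
    apply this.congr'
    filter_upwards [self_mem_nhdsWithin] with z hz
    have hzx : x < z := hz
    simp only [Function.comp_apply, slope_def_field, hgx, sub_zero, neg_zero]
    rw [max_self, sub_zero, ← max_div_div_right (by linarith : (0:ℝ) ≤ z - x), zero_div, neg_div]
  · rw [dneg, if_neg (by linarith), if_pos hgx]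
    have hev : ∀ᶠ t in nhdsWithin x (Set.Ici x), 0 < g t :=
      h.continuousWithinAt.eventually_const_lt hgx
    have heq : (fun t => max (-(g t)) 0) =ᶠ[nhdsWithin x (Set.Ici x)] (fun _ => (0:ℝ)) := by
      filter_upwards [hev] with t ht
      exact max_eq_right (by linarith)
    exact (hasDerivWithinAt_const x _ 0).congr_of_eventuallyEq heq (max_eq_right (by linarith))

lemma dneg_le {v d c : ℝ} (h : v ≤ 0 → -d ≤ c) (hc : 0 ≤ c) : dneg v d ≤ c := by
  rw [dneg]
  split_ifs with h1 h2
  · exact h h1.le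
  · exact hc
  · exact max_le (h (by linarith)) hc

lemma s12 {c v : ℝ} (h : 0 ≤ c ∨ v ≤ 0) : -|c| * max (-v) 0 ≤ c * v := by
  rcases le_total v 0 with hv | hv
  · rw [max_eq_left (by linarith)]
    nlinarith [le_abs_self c, neg_abs_le c]
  · rw [max_eq_right (by linarith)]
    rcases h with h | h
    · nlinarith
    · have : v = 0 := le_antisymm h hv
      simp [this]

lemma key1 {a xx P N c d : ℝ} (hap : max a 0 ≤ P) (han : max (-a) 0 ≤ N)
    (hc : max (-xx) 0 ≤ c) (hd : max xx 0 ≤ d) : -(P * c + N * d) ≤ a * xx := by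
  have h1 : (0:ℝ) ≤ max a 0 := le_max_right _ _
  have h2 : (0:ℝ) ≤ max (-a) 0 := le_max_right _ _
  have h3 : (0:ℝ) ≤ max xx 0 := le_max_right _ _
  have h4 : (0:ℝ) ≤ max (-xx) 0 := le_max_right _ _
  have ha : max a 0 - max (-a) 0 = a := by
    rcases le_total a 0 with h | h
    · rw [max_eq_right h, max_eq_left (by linarith)]; ring
    · rw [max_eq_left h, max_eq_right (by linarith)]; ring
  have hx : max xx 0 - max (-xx) 0 = xx := by
    rcases le_total xx 0 with h | h
    · rw [max_eq_right h, max_eq_left (by linarith)]; ring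
    · rw [max_eq_left h, max_eq_right (by linarith)]; ring
  have p1 : max a 0 * max (-xx) 0 ≤ P * c :=
    mul_le_mul hap hc h4 (le_trans h1 hap)
  have p2 : max (-a) 0 * max xx 0 ≤ N * d :=
    mul_le_mul han hd h3 (le_trans h2 han)
  nlinarith [mul_nonneg h1 h3, mul_nonneg h2 h4]

lemma negpart_add {b c : ℝ} : max (-(b + c)) 0 ≤ max (-b) 0 + max (-c) 0 := by
  apply max_le
  · have := le_max_left (-b) 0; have := le_max_left (-c) 0; linarith
  · have := le_max_right (-b) 0; have := le_max_right (-c) 0; linarith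

lemma pospart_add {b c : ℝ} : max (b + c) 0 ≤ max b 0 + max c 0 := by
  apply max_le
  · have := le_max_left b 0; have := le_max_left c 0; linarith
  · have := le_max_right b 0; have := le_max_right c 0; linarith

lemma sumpos {M : ℕ} (α d : Fin M → ℝ) (hα : ∀ i, 0 ≤ α i) (hα1 : ∀ i, α i ≤ 1) :
    max (∑ k, α k * d k) 0 ≤ ∑ k, max (d k) 0 := by
  apply max_le
  · apply Finset.sum_le_sum
    intro k _
    calc α k * d k ≤ α k * max (d k) 0 :=
          mul_le_mul_of_nonneg_left (le_max_left _ _) (hα k)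
      _ ≤ 1 * max (d k) 0 := mul_le_mul_of_nonneg_right (hα1 k) (le_max_right _ _)
      _ = max (d k) 0 := one_mul _
  · exact Finset.sum_nonneg fun k _ => le_max_right _ _

lemma dpos {d wv wl wh : ℝ} (h1 : wl ≤ wv) (h2 : wv ≤ wh) :
    0 ≤ d * wv - max d 0 * wl + (max d 0 - d) * wh := by
  have k1 : 0 ≤ max d 0 * (wv - wl) :=
    mul_nonneg (le_max_right _ _) (by linarith)
  have k2 : 0 ≤ (max d 0 - d) * (wh - wv) :=
    mul_nonneg (by have := le_max_left d 0; linarith) (by linarith)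
  nlinarith

lemma maxsub (v : ℝ) : max v 0 - v = max (-v) 0 := by
  rcases le_total v 0 with h | h
  · rw [max_eq_right h, max_eq_left (by linarith)]; ring
  · rw [max_eq_left h, max_eq_right (by linarith)]; ring

lemma dpos2 {d wv wl wh : ℝ} (h1 : wl ≤ wv) (h2 : wv ≤ wh) :
    0 ≤ max d 0 * wh - (max d 0 - d) * wl - d * wv := by
  have k1 : 0 ≤ max d 0 * (wh - wv) :=
    mul_nonneg (le_max_right _ _) (by linarith)
  have k2 : 0 ≤ (max d 0 - d) * (wv - wl) :=
    mul_nonneg (by have := le_max_left d 0; linarith) (by linarith)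
  nlinarith

lemma freq_slope {f : ℝ → ℝ} {f' x : ℝ} (h : HasDerivWithinAt f f' (Set.Ici x) x)
    (r : ℝ) (hr : f' < r) :
    ∃ᶠ z in nhdsWithin x (Set.Ioi x), (z - x)⁻¹ * (f z - f x) < r := by
  rw [hasDerivWithinAt_iff_tendsto_slope, Set.Ici_sdiff_left] at h
  have hev : ∀ᶠ z in nhdsWithin x (Set.Ioi x), slope f x z < r :=
    (tendsto_order.1 h).2 r hr
  refine (hev.mono ?_).frequently
  intro z hz
  rwa [slope_def_field, div_eq_inv_mul] at hz

end Aux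

/-- Enhanced interval predictor of Leurent et al. (2019): for a linear system whose
state matrix lies in a polytope with Metzler centre `A₀`, the enhanced interval
predictor encloses the true trajectory componentwise. -/


theorem stmt_8 (p q r M : ℕ)
    (A₀ : Matrix (Fin p) (Fin p) ℝ)
    (hMetzler : ∀ i j, i ≠ j → 0 ≤ A₀ i j)
    (ΔA : Fin M → Matrix (Fin p) (Fin p) ℝ)
    (α : Fin M → ℝ) (hα : ∀ i, 0 ≤ α i) (hα1 : ∑ i, α i = 1)
    (A : Matrix (Fin p) (Fin p) ℝ) (hA : A = A₀ + ∑ i, α i • ΔA i)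
    (ΔAp ΔAm : Matrix (Fin p) (Fin p) ℝ)
    (hΔAp : ΔAp = ∑ i, matPos (ΔA i)) (hΔAm : ΔAm = ∑ i, matNeg (ΔA i))
    (B : Matrix (Fin p) (Fin q) ℝ) (D : Matrix (Fin p) (Fin r) ℝ)
    (t₀ : ℝ) (u : ℝ → Fin q → ℝ) (w wlo whi : ℝ → Fin r → ℝ)
    (hu : ContinuousOn u (Set.Ici t₀)) (hw : ContinuousOn w (Set.Ici t₀))
    (hwlo : ContinuousOn wlo (Set.Ici t₀)) (hwhi : ContinuousOn whi (Set.Ici t₀))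
    (hwle : ∀ t ∈ Set.Ici t₀, ∀ i, wlo t i ≤ w t i ∧ w t i ≤ whi t i)
    (x xlo xhi : ℝ → Fin p → ℝ)
    (hx : ∀ t ∈ Set.Ici t₀, HasDerivWithinAt x
      (A.mulVec (x t) + B.mulVec (u t) + D.mulVec (w t)) (Set.Ici t₀) t)
    (hxlo : ∀ t ∈ Set.Ici t₀, HasDerivWithinAt xlo
      (A₀.mulVec (xlo t) - ΔAp.mulVec (vecNeg (xlo t)) - ΔAm.mulVec (vecPos (xhi t))
        + B.mulVec (u t) + (matPos D).mulVec (wlo t) - (matNeg D).mulVec (whi t))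
      (Set.Ici t₀) t)
    (hxhi : ∀ t ∈ Set.Ici t₀, HasDerivWithinAt xhi
      (A₀.mulVec (xhi t) + ΔAp.mulVec (vecPos (xhi t)) + ΔAm.mulVec (vecNeg (xlo t))
        + B.mulVec (u t) + (matPos D).mulVec (whi t) - (matNeg D).mulVec (wlo t))
      (Set.Ici t₀) t)
    (hinit : xlo t₀ = x t₀ ∧ xhi t₀ = x t₀) :
    ∀ t ∈ Set.Ici t₀, ∀ i, xlo t i ≤ x t i ∧ x t i ≤ xhi t i := by
  classical
  -- named right-hand sides
  obtain ⟨R, hRdef⟩ : ∃ R : ℝ → Fin p → ℝ,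
      ∀ t, R t = A.mulVec (x t) + B.mulVec (u t) + D.mulVec (w t) := ⟨_, fun _ => rfl⟩
  obtain ⟨Rlo, hRlodef⟩ : ∃ Rlo : ℝ → Fin p → ℝ,
      ∀ t, Rlo t = A₀.mulVec (xlo t) - ΔAp.mulVec (vecNeg (xlo t)) - ΔAm.mulVec (vecPos (xhi t))
        + B.mulVec (u t) + (matPos D).mulVec (wlo t) - (matNeg D).mulVec (whi t) :=
    ⟨_, fun _ => rfl⟩
  obtain ⟨Rhi, hRhidef⟩ : ∃ Rhi : ℝ → Fin p → ℝ,
      ∀ t, Rhi t = A₀.mulVec (xhi t) + ΔAp.mulVec (vecPos (xhi t)) + ΔAm.mulVec (vecNeg (xlo t))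
        + B.mulVec (u t) + (matPos D).mulVec (whi t) - (matNeg D).mulVec (wlo t) :=
    ⟨_, fun _ => rfl⟩
  obtain ⟨m, hmdef⟩ : ∃ m : ℝ → ℝ,
      ∀ t, m t = ∑ i, (max (-(x t i - xlo t i)) 0 + max (-(xhi t i - x t i)) 0) :=
    ⟨_, fun _ => rfl⟩
  obtain ⟨dm, dmdef⟩ : ∃ dm : ℝ → ℝ,
      ∀ s, dm s = ∑ i, (dneg (x s i - xlo s i) (R s i - Rlo s i)
        + dneg (xhi s i - x s i) (Rhi s i - R s i)) := ⟨_, fun _ => rfl⟩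
  obtain ⟨C, hCdef⟩ : ∃ C : ℝ, C = ∑ i, ∑ j, (|A₀ i j| + ΔAp i j + ΔAm i j) := ⟨_, rfl⟩
  obtain ⟨K, hKdef⟩ : ∃ K : ℝ, K = (p : ℝ) * (2 * C) := ⟨_, rfl⟩
  -- entry identities
  have hApe : ∀ i j, ΔAp i j = ∑ k, max (ΔA k i j) 0 := by
    intro i j; rw [hΔAp]; simp [matPos, Matrix.sum_apply]
  have hAme : ∀ i j, ΔAm i j = ∑ k, (max (ΔA k i j) 0 - ΔA k i j) := by
    intro i j; rw [hΔAm]; simp [matNeg, matPos, Matrix.sub_apply, Matrix.sum_apply]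
  have hAe : ∀ i j, A i j = A₀ i j + ∑ k, α k * ΔA k i j := by
    intro i j; rw [hA]; simp [Matrix.add_apply, Matrix.sum_apply, Matrix.smul_apply, smul_eq_mul]
  have hα1' : ∀ k, α k ≤ 1 := by
    intro k; rw [← hα1]
    exact Finset.single_le_sum (fun i _ => hα i) (Finset.mem_univ k)
  have hApnn : ∀ i j, 0 ≤ ΔAp i j := by
    intro i j; rw [hApe i j]
    exact Finset.sum_nonneg fun k _ => le_max_right _ _
  have hAmnn : ∀ i j, 0 ≤ ΔAm i j := by
    intro i j; rw [hAme i j]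
    exact Finset.sum_nonneg fun k _ => by have := le_max_left (ΔA k i j) 0; linarith
  have hentry_nn : ∀ i j, 0 ≤ |A₀ i j| + ΔAp i j + ΔAm i j := by
    intro i j
    have := abs_nonneg (A₀ i j); have := hApnn i j; have := hAmnn i j; linarith
  have hC0 : 0 ≤ C := by
    rw [hCdef]
    exact Finset.sum_nonneg fun i _ => Finset.sum_nonneg fun j _ => hentry_nn i j
  have hCentry : ∀ i j, |A₀ i j| + ΔAp i j + ΔAm i j ≤ C := by
    intro i j; rw [hCdef]
    calc |A₀ i j| + ΔAp i j + ΔAm i j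
        ≤ ∑ j', (|A₀ i j'| + ΔAp i j' + ΔAm i j') :=
          Finset.single_le_sum (fun j' _ => hentry_nn i j') (Finset.mem_univ j)
      _ ≤ ∑ i', ∑ j', (|A₀ i' j'| + ΔAp i' j' + ΔAm i' j') :=
          Finset.single_le_sum
            (f := fun i' => ∑ j', (|A₀ i' j'| + ΔAp i' j' + ΔAm i' j'))
            (fun i' _ => Finset.sum_nonneg fun j' _ => hentry_nn i' j') (Finset.mem_univ i)
  have hm0 : ∀ t, 0 ≤ m t := by
    intro t; rw [hmdef]
    exact Finset.sum_nonneg fun i _ => add_nonneg (le_max_right _ _) (le_max_right _ _)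
  -- component derivatives
  have hxc : ∀ s ∈ Set.Ici t₀, ∀ i, HasDerivWithinAt (fun t => x t i) (R s i) (Set.Ici s) s := by
    intro s hs i
    have h := (hx s hs).mono (Set.Ici_subset_Ici.mpr hs)
    rw [← hRdef s] at h
    exact hasDerivWithinAt_pi.1 h i
  have hxloc : ∀ s ∈ Set.Ici t₀, ∀ i,
      HasDerivWithinAt (fun t => xlo t i) (Rlo s i) (Set.Ici s) s := by
    intro s hs i
    have h := (hxlo s hs).mono (Set.Ici_subset_Ici.mpr hs)
    rw [← hRlodef s] at h
    exact hasDerivWithinAt_pi.1 h i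
  have hxhic : ∀ s ∈ Set.Ici t₀, ∀ i,
      HasDerivWithinAt (fun t => xhi t i) (Rhi s i) (Set.Ici s) s := by
    intro s hs i
    have h := (hxhi s hs).mono (Set.Ici_subset_Ici.mpr hs)
    rw [← hRhidef s] at h
    exact hasDerivWithinAt_pi.1 h i
  -- derivative of m
  have hmc : ∀ s ∈ Set.Ici t₀, HasDerivWithinAt m (dm s) (Set.Ici s) s := by
    intro s hs
    have h1 : ∀ i : Fin p,
        HasDerivWithinAt (fun t => max (-(x t i - xlo t i)) 0 + max (-(xhi t i - x t i)) 0)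
          (dneg (x s i - xlo s i) (R s i - Rlo s i)
            + dneg (xhi s i - x s i) (Rhi s i - R s i)) (Set.Ici s) s := by
      intro i
      exact (negPart_hasDerivWithinAt ((hxc s hs i).sub (hxloc s hs i))).add
        (negPart_hasDerivWithinAt ((hxhic s hs i).sub (hxc s hs i)))
    have h2 := HasDerivWithinAt.fun_sum (u := Finset.univ) (fun i (_ : i ∈ Finset.univ) => h1 i)
    rw [dmdef]
    exact h2.congr (fun t _ => hmdef t) (hmdef s)
  -- expansions of components of the right-hand sides
  have hRi : ∀ s, ∀ i : Fin p, R s i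
      = ∑ j, A i j * x s j + ∑ j, B i j * u s j + ∑ j, D i j * w s j := by
    intro s i
    rw [hRdef]
    simp [Matrix.mulVec, dotProduct]
  have hRloi : ∀ s, ∀ i : Fin p, Rlo s i
      = ∑ j, A₀ i j * xlo s j - ∑ j, ΔAp i j * (max (xlo s j) 0 - xlo s j)
        - ∑ j, ΔAm i j * max (xhi s j) 0 + ∑ j, B i j * u s j
        + ∑ j, max (D i j) 0 * wlo s j - ∑ j, (max (D i j) 0 - D i j) * whi s j := by
    intro s i
    rw [hRlodef]
    simp [Matrix.mulVec, dotProduct, vecNeg, vecPos, matPos, matNeg,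
      Matrix.sub_apply, Pi.sub_apply]
  have hRhii : ∀ s, ∀ i : Fin p, Rhi s i
      = ∑ j, A₀ i j * xhi s j + ∑ j, ΔAp i j * max (xhi s j) 0
        + ∑ j, ΔAm i j * (max (xlo s j) 0 - xlo s j) + ∑ j, B i j * u s j
        + ∑ j, max (D i j) 0 * whi s j - ∑ j, (max (D i j) 0 - D i j) * wlo s j := by
    intro s i
    rw [hRhidef]
    simp [Matrix.mulVec, dotProduct, vecNeg, vecPos, matPos, matNeg,
      Matrix.sub_apply, Pi.sub_apply]
  have split : ∀ s, ∀ i : Fin p, ∑ j, A i j * x s j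
      = ∑ j, A₀ i j * x s j + ∑ j, (∑ k, α k * ΔA k i j) * x s j := by
    intro s i
    rw [← Finset.sum_add_distrib]
    exact Finset.sum_congr rfl fun j _ => by rw [hAe i j]; ring
  -- bounds on the positive/negative parts of the polytope coefficients
  have hap : ∀ i j, max (∑ k, α k * ΔA k i j) 0 ≤ ΔAp i j := by
    intro i j
    rw [hApe i j]
    exact sumpos α _ hα hα1'
  have han : ∀ i j, max (-(∑ k, α k * ΔA k i j)) 0 ≤ ΔAm i j := by
    intro i j
    rw [hAme i j]
    have h2' : max (∑ k, α k * -(ΔA k i j)) 0 ≤ ∑ k, max (-(ΔA k i j)) 0 :=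
      sumpos α (fun k => -(ΔA k i j)) hα hα1'
    rw [show ∑ k, α k * -(ΔA k i j) = -(∑ k, α k * ΔA k i j) by
      rw [← Finset.sum_neg_distrib]; exact Finset.sum_congr rfl fun k _ => by ring] at h2'
    refine h2'.trans (le_of_eq (Finset.sum_congr rfl fun k _ => ?_))
    rw [maxsub]
  -- bounds on positive/negative parts of the true state
  have hxm : ∀ s, ∀ j : Fin p,
      max (-(x s j)) 0 ≤ (max (xlo s j) 0 - xlo s j) + max (-(x s j - xlo s j)) 0 := by
    intro s j
    rw [maxsub]
    have h3 := negpart_add (b := xlo s j) (c := x s j - xlo s j)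
    have h4 : xlo s j + (x s j - xlo s j) = x s j := by ring
    rw [h4] at h3; exact h3
  have hxp : ∀ s, ∀ j : Fin p,
      max (x s j) 0 ≤ max (xhi s j) 0 + max (-(xhi s j - x s j)) 0 := by
    intro s j
    have h3 := pospart_add (b := xhi s j) (c := x s j - xhi s j)
    have h4 : xhi s j + (x s j - xhi s j) = x s j := by ring
    rw [h4] at h3
    rw [neg_sub]; exact h3
  -- final sum bound
  have hfinal : ∀ s, ∀ i : Fin p,
      ∑ j, |A₀ i j| * max (-(x s j - xlo s j)) 0 + ∑ j, ΔAp i j * max (-(x s j - xlo s j)) 0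
        + ∑ j, ΔAm i j * max (-(xhi s j - x s j)) 0 ≤ C * m s := by
    intro s i
    rw [hmdef, Finset.mul_sum, ← Finset.sum_add_distrib, ← Finset.sum_add_distrib]
    apply Finset.sum_le_sum
    intro j _
    have b1 := hCentry i j
    have n1 : (0:ℝ) ≤ max (-(x s j - xlo s j)) 0 := le_max_right _ _
    have n2 : (0:ℝ) ≤ max (-(xhi s j - x s j)) 0 := le_max_right _ _
    have q1 : (|A₀ i j| + ΔAp i j) * max (-(x s j - xlo s j)) 0 ≤ C * max (-(x s j - xlo s j)) 0 :=
      mul_le_mul_of_nonneg_right (by have := hAmnn i j; linarith) n1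
    have q2 : ΔAm i j * max (-(xhi s j - x s j)) 0 ≤ C * max (-(xhi s j - x s j)) 0 :=
      mul_le_mul_of_nonneg_right
        (by have := abs_nonneg (A₀ i j); have := hApnn i j; linarith) n2
    nlinarith [q1, q2]
  have hfinal2 : ∀ s, ∀ i : Fin p,
      ∑ j, |A₀ i j| * max (-(xhi s j - x s j)) 0 + ∑ j, ΔAp i j * max (-(xhi s j - x s j)) 0
        + ∑ j, ΔAm i j * max (-(x s j - xlo s j)) 0 ≤ C * m s := by
    intro s i
    rw [hmdef, Finset.mul_sum, ← Finset.sum_add_distrib, ← Finset.sum_add_distrib]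
    apply Finset.sum_le_sum
    intro j _
    have b1 := hCentry i j
    have n1 : (0:ℝ) ≤ max (-(x s j - xlo s j)) 0 := le_max_right _ _
    have n2 : (0:ℝ) ≤ max (-(xhi s j - x s j)) 0 := le_max_right _ _
    have q1 : (|A₀ i j| + ΔAp i j) * max (-(xhi s j - x s j)) 0 ≤ C * max (-(xhi s j - x s j)) 0 :=
      mul_le_mul_of_nonneg_right (by have := hAmnn i j; linarith) n2
    have q2 : ΔAm i j * max (-(x s j - xlo s j)) 0 ≤ C * max (-(x s j - xlo s j)) 0 :=
      mul_le_mul_of_nonneg_right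
        (by have := abs_nonneg (A₀ i j); have := hApnn i j; linarith) n1
    nlinarith [q1, q2]
  -- the two differential lower bounds
  have hlb : ∀ s ∈ Set.Ici t₀, ∀ i, x s i - xlo s i ≤ 0 → -(R s i - Rlo s i) ≤ C * m s := by
    intro s hs i hei
    have E1s : -(∑ j, |A₀ i j| * max (-(x s j - xlo s j)) 0)
        ≤ ∑ j, A₀ i j * x s j - ∑ j, A₀ i j * xlo s j := by
      rw [← Finset.sum_sub_distrib, ← Finset.sum_neg_distrib]
      apply Finset.sum_le_sum
      intro j _
      have h := s12 (c := A₀ i j) (v := x s j - xlo s j) ?_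
      · have hmul : A₀ i j * (x s j - xlo s j) = A₀ i j * x s j - A₀ i j * xlo s j := by ring
        linarith [h, hmul.le, hmul.ge]
      · rcases eq_or_ne j i with rfl | hne
        · exact Or.inr hei
        · exact Or.inl (hMetzler i j (Ne.symm hne))
    have E2 : ∀ j : Fin p,
        -(ΔAp i j * ((max (xlo s j) 0 - xlo s j) + max (-(x s j - xlo s j)) 0)
          + ΔAm i j * (max (xhi s j) 0 + max (-(xhi s j - x s j)) 0))
        ≤ (∑ k, α k * ΔA k i j) * x s j :=
      fun j => key1 (hap i j) (han i j) (hxm s j) (hxp s j)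
    have E2s : -(∑ j, ΔAp i j * ((max (xlo s j) 0 - xlo s j) + max (-(x s j - xlo s j)) 0)
          + ∑ j, ΔAm i j * (max (xhi s j) 0 + max (-(xhi s j - x s j)) 0))
        ≤ ∑ j, (∑ k, α k * ΔA k i j) * x s j := by
      rw [← Finset.sum_add_distrib, ← Finset.sum_neg_distrib]
      exact Finset.sum_le_sum fun j _ => E2 j
    have E3 : (0:ℝ) ≤ ∑ j, D i j * w s j - ∑ j, max (D i j) 0 * wlo s j
        + ∑ j, (max (D i j) 0 - D i j) * whi s j := by
      rw [← Finset.sum_sub_distrib, ← Finset.sum_add_distrib]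
      exact Finset.sum_nonneg fun j _ => dpos (hwle s hs j).1 (hwle s hs j).2
    have expand2 : ∑ j, ΔAp i j * ((max (xlo s j) 0 - xlo s j) + max (-(x s j - xlo s j)) 0)
        = ∑ j, ΔAp i j * (max (xlo s j) 0 - xlo s j)
          + ∑ j, ΔAp i j * max (-(x s j - xlo s j)) 0 := by
      rw [← Finset.sum_add_distrib]
      exact Finset.sum_congr rfl fun j _ => by ring
    have expand3 : ∑ j, ΔAm i j * (max (xhi s j) 0 + max (-(xhi s j - x s j)) 0)
        = ∑ j, ΔAm i j * max (xhi s j) 0 + ∑ j, ΔAm i j * max (-(xhi s j - x s j)) 0 := by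
      rw [← Finset.sum_add_distrib]
      exact Finset.sum_congr rfl fun j _ => by ring
    rw [hRi s i, hRloi s i, split s i]
    linarith [E1s, E2s, E3, hfinal s i, expand2.le, expand2.ge, expand3.le, expand3.ge]
  have hub : ∀ s ∈ Set.Ici t₀, ∀ i, xhi s i - x s i ≤ 0 → -(Rhi s i - R s i) ≤ C * m s := by
    intro s hs i hfi
    have F1s : -(∑ j, |A₀ i j| * max (-(xhi s j - x s j)) 0)
        ≤ ∑ j, A₀ i j * xhi s j - ∑ j, A₀ i j * x s j := by
      rw [← Finset.sum_sub_distrib, ← Finset.sum_neg_distrib]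
      apply Finset.sum_le_sum
      intro j _
      have h := s12 (c := A₀ i j) (v := xhi s j - x s j) ?_
      · have hmul : A₀ i j * (xhi s j - x s j) = A₀ i j * xhi s j - A₀ i j * x s j := by ring
        linarith [h, hmul.le, hmul.ge]
      · rcases eq_or_ne j i with rfl | hne
        · exact Or.inr hfi
        · exact Or.inl (hMetzler i j (Ne.symm hne))
    have F2 : ∀ j : Fin p,
        -(ΔAm i j * ((max (xlo s j) 0 - xlo s j) + max (-(x s j - xlo s j)) 0)
          + ΔAp i j * (max (xhi s j) 0 + max (-(xhi s j - x s j)) 0))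
        ≤ -((∑ k, α k * ΔA k i j) * x s j) := by
      intro j
      have h := key1 (a := -(∑ k, α k * ΔA k i j)) (xx := x s j)
        (P := ΔAm i j) (N := ΔAp i j)
        (han i j) (by rw [neg_neg]; exact hap i j) (hxm s j) (hxp s j)
      calc -(ΔAm i j * ((max (xlo s j) 0 - xlo s j) + max (-(x s j - xlo s j)) 0)
          + ΔAp i j * (max (xhi s j) 0 + max (-(xhi s j - x s j)) 0))
          ≤ -(∑ k, α k * ΔA k i j) * x s j := h
        _ = -((∑ k, α k * ΔA k i j) * x s j) := by ring
    have F2s : -(∑ j, ΔAm i j * ((max (xlo s j) 0 - xlo s j) + max (-(x s j - xlo s j)) 0)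
          + ∑ j, ΔAp i j * (max (xhi s j) 0 + max (-(xhi s j - x s j)) 0))
        ≤ -(∑ j, (∑ k, α k * ΔA k i j) * x s j) := by
      rw [← Finset.sum_add_distrib, ← Finset.sum_neg_distrib, ← Finset.sum_neg_distrib]
      exact Finset.sum_le_sum fun j _ => F2 j
    have F3 : (0:ℝ) ≤ ∑ j, max (D i j) 0 * whi s j
        - ∑ j, (max (D i j) 0 - D i j) * wlo s j - ∑ j, D i j * w s j := by
      rw [← Finset.sum_sub_distrib, ← Finset.sum_sub_distrib]
      exact Finset.sum_nonneg fun j _ => dpos2 (hwle s hs j).1 (hwle s hs j).2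
    have expand2 : ∑ j, ΔAm i j * ((max (xlo s j) 0 - xlo s j) + max (-(x s j - xlo s j)) 0)
        = ∑ j, ΔAm i j * (max (xlo s j) 0 - xlo s j)
          + ∑ j, ΔAm i j * max (-(x s j - xlo s j)) 0 := by
      rw [← Finset.sum_add_distrib]
      exact Finset.sum_congr rfl fun j _ => by ring
    have expand3 : ∑ j, ΔAp i j * (max (xhi s j) 0 + max (-(xhi s j - x s j)) 0)
        = ∑ j, ΔAp i j * max (xhi s j) 0 + ∑ j, ΔAp i j * max (-(xhi s j - x s j)) 0 := by
      rw [← Finset.sum_add_distrib]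
      exact Finset.sum_congr rfl fun j _ => by ring
    rw [hRhii s i, hRi s i, split s i]
    linarith [F1s, F2s, F3, hfinal2 s i, expand2.le, expand2.ge, expand3.le, expand3.ge]
  -- continuity of m
  have hcm : ContinuousOn m (Set.Ici t₀) := by
    have hcx : ContinuousOn x (Set.Ici t₀) := fun t ht => (hx t ht).continuousWithinAt
    have hcxlo : ContinuousOn xlo (Set.Ici t₀) := fun t ht => (hxlo t ht).continuousWithinAt
    have hcxhi : ContinuousOn xhi (Set.Ici t₀) := fun t ht => (hxhi t ht).continuousWithinAt
    have : ContinuousOn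
        (fun t => ∑ i, (max (-(x t i - xlo t i)) 0 + max (-(xhi t i - x t i)) 0))
        (Set.Ici t₀) := by
      apply continuousOn_finset_sum
      intro i _
      have c1 : ContinuousOn (fun t => x t i) (Set.Ici t₀) :=
        (continuous_apply i).comp_continuousOn hcx
      have c2 : ContinuousOn (fun t => xlo t i) (Set.Ici t₀) :=
        (continuous_apply i).comp_continuousOn hcxlo
      have c3 : ContinuousOn (fun t => xhi t i) (Set.Ici t₀) :=
        (continuous_apply i).comp_continuousOn hcxhi
      exact ((continuous_id.max continuous_const).comp_continuousOn ((c1.sub c2).neg)).add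
        ((continuous_id.max continuous_const).comp_continuousOn ((c3.sub c1).neg))
    exact this.congr fun t _ => hmdef t
  have hinit0 : m t₀ = 0 := by
    rw [hmdef]
    apply Finset.sum_eq_zero
    intro i _
    rw [hinit.1, hinit.2]
    simp
  -- Grönwall: m vanishes identically
  have hmzero : ∀ T ∈ Set.Ici t₀, m T = 0 := by
    intro T hT
    have hbK : ∀ s ∈ Set.Ico t₀ T, dm s ≤ K * m s + 0 := by
      intro s hs
      have hs' : s ∈ Set.Ici t₀ := hs.1
      have hterm : ∀ i : Fin p,
          dneg (x s i - xlo s i) (R s i - Rlo s i)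
            + dneg (xhi s i - x s i) (Rhi s i - R s i) ≤ C * m s + C * m s := by
        intro i
        have d1 : dneg (x s i - xlo s i) (R s i - Rlo s i) ≤ C * m s :=
          dneg_le (fun h => hlb s hs' i h) (mul_nonneg hC0 (hm0 s))
        have d2 : dneg (xhi s i - x s i) (Rhi s i - R s i) ≤ C * m s :=
          dneg_le (fun h => hub s hs' i h) (mul_nonneg hC0 (hm0 s))
        linarith
      calc dm s = ∑ i, (dneg (x s i - xlo s i) (R s i - Rlo s i)
            + dneg (xhi s i - x s i) (Rhi s i - R s i)) := dmdef s
        _ ≤ ∑ _i : Fin p, (C * m s + C * m s) := Finset.sum_le_sum fun i _ => hterm i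
        _ = K * m s + 0 := by
            rw [Finset.sum_const, Finset.card_univ, Fintype.card_fin, nsmul_eq_mul, hKdef]
            ring
    have hg := le_gronwallBound_of_liminf_deriv_right_le (f := m) (f' := dm)
      (δ := 0) (K := K) (ε := 0) (a := t₀) (b := T)
      (hcm.mono Set.Icc_subset_Ici_self)
      (fun s hs r hr => freq_slope (hmc s hs.1) r hr)
      (le_of_eq hinit0) hbK T ⟨hT, le_refl T⟩
    rw [gronwallBound_ε0_δ0] at hg
    exact le_antisymm hg (hm0 T)
  -- extraction
  intro t ht i
  have h0 := hmzero t ht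
  rw [hmdef] at h0
  have hle : max (-(x t i - xlo t i)) 0 + max (-(xhi t i - x t i)) 0 ≤ 0 := by
    calc max (-(x t i - xlo t i)) 0 + max (-(xhi t i - x t i)) 0
        ≤ ∑ i', (max (-(x t i' - xlo t i')) 0 + max (-(xhi t i' - x t i')) 0) :=
          Finset.single_le_sum
            (f := fun i' => max (-(x t i' - xlo t i')) 0 + max (-(xhi t i' - x t i')) 0)
            (fun i' _ => add_nonneg (le_max_right _ _) (le_max_right _ _))
            (Finset.mem_univ i)
      _ = 0 := h0
  constructor
  · have a1 := le_max_left (-(x t i - xlo t i)) 0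
    have a2 := le_max_right (-(x t i - xlo t i)) 0
    have a3 := le_max_right (-(xhi t i - x t i)) 0
    linarith
  · have a1 := le_max_left (-(xhi t i - x t i)) 0
    have a2 := le_max_right (-(xhi t i - x t i)) 0
    have a3 := le_max_right (-(x t i - xlo t i)) 0
    linarith
end
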